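/- Let X be a topological space and f : X → ω a function such that {x ∈ X : f(x) ≥ n} is dense in X for every n < ω (X is ω-weakly-resolvable). Then in the forcing extension by Fn(ω, ω) (finite partial functions from ω to ω), with generic function g = ⋃G : ω → ω, the composition g ∘ f witnesses that X is ω-resolvable: each set {x ∈ X : g(f(x)) = n} is dense in X. -/
import Mathlib

set_option autoImplicit false

open Set

/-- if `f : X → ω` witnesses that `X` is `ω`-weakly-resolvable, then the
generic function `g = ⋃ G` added by `Fn(ω, ω)` makes each fiber of `g ∘ f` dense. We
express this forcing-theoretically: conditions are finite partial functions
`p : ℕ → Option ℕ`, and for every `n` and every nonempty open `U`, the set of conditions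
forcing `∃ x ∈ U, g (f x) = n` (namely those `q` with `q (f x) = some n` for some
`x ∈ U`) is dense in the poset `Fn(ω, ω)`; hence in the extension each set
`{x : g (f x) = n}` is dense in `X`. -/
theorem generic_composition_resolves {X : Type*} [TopologicalSpace X]
    (f : X → ℕ) (hf : ∀ n : ℕ, Dense {x : X | n ≤ f x}) :
    ∀ (n : ℕ) (U : Set X), IsOpen U → U.Nonempty →
      ∀ p : ℕ → Option ℕ, {k | p k ≠ none}.Finite →
        ∃ q : ℕ → Option ℕ, {k | q k ≠ none}.Finite ∧
          (∀ k v, p k = some v → q k = some v) ∧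
          ∃ x ∈ U, q (f x) = some n := by
  intro n U hU hUne p hp
  -- bound on the support of `p`
  set m : ℕ := hp.toFinset.sup id + 1 with hm
  have hbig : ∀ k, m ≤ k → p k = none := by
    intro k hk
    by_contra h
    have hk' : k ∈ hp.toFinset := by simpa using h
    have := Finset.le_sup (f := id) hk'
    simp only [id] at this
    omega
  -- find `x ∈ U` with `m ≤ f x`
  obtain ⟨x, hxU, hxf⟩ : ∃ x ∈ U, m ≤ f x := by
    obtain ⟨x, hx⟩ := (hf m).exists_mem_open hU hUne
    exact ⟨x, hx.2, hx.1⟩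
  refine ⟨fun k => if k = f x then some n else p k, ?_, ?_, x, hxU, by simp⟩
  · apply (hp.union (Set.finite_singleton (f x))).subset
    intro k hk
    by_cases h : k = f x
    · simp [h]
    · simp only [mem_setOf_eq, h, if_false] at hk
      exact Or.inl hk
  · intro k v hkv
    have hne : k ≠ f x := by
      intro h; subst h
      rw [hbig (f x) (by omega)] at hkv
      exact (Option.some_ne_none v hkv.symm).elim
    simp [hne, hkv]
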